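/- Let L′ be a regular language over a finite alphabet Σ, let 𝔽 be the word comparison function associated with a cost function C, let k ∈ ℕ and let a ∈ Σ. Set 𝒲 = ({b ∈ Σ | C(ε,b) = 0})* and X(L′) = {L′} ∪ {w⁻¹(L′) | w ∈ 𝒲}. Then a⁻¹(𝔽_k(L′)) = ⋃_{L″∈X(L′), b∈Σ} 𝔽_{k−C(a,b)}(b⁻¹(L″)) ∪ ⋃_{L″∈X(L′)} 𝔽_{k−C(a,ε)}(L″) ∪ a⁻¹( ⋃_{L″∈X(L′), b∈Σ, C(ε,b)≠0} 𝔽_{k−C(ε,b)}(b⁻¹(L″)) ). -/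

import Mathlib

/-!
Quotient of an approximate language `𝔽_k(L′)` w.r.t. a symbol
(general word comparison functions).

A cost function over `S × S`, `S = Σ ∪ {ε}`, is a function
`Option σ → Option σ → Option ℕ` (`none : Option σ` is `ε`, `none : Option ℕ`
is the undefined value `⊥`) with `C α α = 0`.  An alignment of two words is a
nonempty list of pairs in `S × S` whose first (resp. second) components
concatenate to the first (resp. second) word; its cost is the `⊥`-absorbing
sum of the costs of its pairs.  `wordComp C u v` is the word comparison
function `𝔽(u,v)`: the minimum cost of an alignment, `⊥` if none is defined.

For `k ∈ ℕ ∪ {⊥}`, `ball C k L` is `𝔽_k(L) = {w | ∃ u ∈ L, 𝔽(w,u) ≤ k}`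
(empty for `k = ⊥`).  `subO k x` is `k - x` where `k - x = ⊥` when `x = ⊥` or
`x > k`.  `leftQuot a L` (resp. `wordQuot u L`) is `a⁻¹(L)` (resp. `u⁻¹(L)`).
`𝒲 = ({b ∈ Σ | C(ε,b) = 0})*` is encoded as the set of words all of whose
letters `b` satisfy `C ε b = 0`, and `X L′ = {L′} ∪ {w⁻¹(L′) | w ∈ 𝒲}`.
Unions of languages are the lattice operations `⊔`/`⨆` on `Language σ`.
-/

/-- A cost function: `C α α = 0` for every `α ∈ Σ ∪ {ε}`. -/
structure CostFun (σ : Type) where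
  C : Option σ → Option σ → Option ℕ
  refl : ∀ α, C α α = some 0

/-- The cost of an alignment: the `⊥`-absorbing sum of the costs of its pairs. -/
def alignCost {σ : Type} (C : CostFun σ) (l : List (Option σ × Option σ)) : Option ℕ :=
  (l.map fun p => C.C p.1 p.2).foldr (fun x y => Option.map₂ (· + ·) x y) (some 0)

/-- The set of defined costs of alignments (of size `≥ 1`) between `u` and `v`. -/
def alignCosts {σ : Type} (C : CostFun σ) (u v : List σ) : Set ℕ :=
  {n | ∃ l : List (Option σ × Option σ), l ≠ [] ∧
        l.filterMap Prod.fst = u ∧ l.filterMap Prod.snd = v ∧ alignCost C l = some n}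

/-- The word comparison function `𝔽` associated with a cost function. -/
noncomputable def wordComp {σ : Type} (C : CostFun σ) (u v : List σ) : Option ℕ := by
  classical
  exact if (alignCosts C u v).Nonempty then some (sInf (alignCosts C u v)) else none

/-- `𝔽_k(L)`: the words `w` such that `𝔽(w,u) ∈ ⟦0,k⟧` for some `u ∈ L`;
empty for `k = ⊥`. -/
noncomputable def ball {σ : Type} (C : CostFun σ) (k : Option ℕ) (L : Language σ) :
    Language σ :=
  match k with
  | none => ⊥
  | some k => {w | ∃ u ∈ L, ∃ n : ℕ, wordComp C w u = some n ∧ n ≤ k}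

/-- `k - x` on `ℕ ∪ {⊥}` (with `k ∈ ℕ`): `⊥` when `x = ⊥` or `x > k`. -/
def subO (k : ℕ) (x : Option ℕ) : Option ℕ :=
  x.bind fun m => if m ≤ k then some (k - m) else none

/-- The left quotient `a⁻¹(L)` of a language w.r.t. a symbol. -/
def leftQuot {σ : Type} (a : σ) (L : Language σ) : Language σ :=
  {w | a :: w ∈ L}

/-- The left quotient `u⁻¹(L)` of a language w.r.t. a word. -/
def wordQuot {σ : Type} (u : List σ) (L : Language σ) : Language σ :=
  {w | u ++ w ∈ L}

-- aux lemmas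
namespace QB
variable {σ : Type}

lemma alignCost_nil (C : CostFun σ) : alignCost C [] = some 0 := rfl

lemma alignCost_cons (C : CostFun σ) (p : Option σ × Option σ) (l) :
    alignCost C (p :: l) = Option.map₂ (· + ·) (C.C p.1 p.2) (alignCost C l) := rfl

lemma map₂_add_assoc (a b c : Option ℕ) :
    Option.map₂ (· + ·) (Option.map₂ (· + ·) a b) c
      = Option.map₂ (· + ·) a (Option.map₂ (· + ·) b c) := by
  cases a <;> cases b <;> cases c <;> simp [Option.map₂, Nat.add_assoc]

lemma map₂_zero_left (x : Option ℕ) : Option.map₂ (· + ·) (some 0) x = x := by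
  cases x <;> simp [Option.map₂]

lemma map₂_some_some (c m : ℕ) :
    Option.map₂ (· + ·) (some c) (some m) = some (c + m) := rfl

lemma map₂_add_eq_some {x y : Option ℕ} {n : ℕ}
    (h : Option.map₂ (· + ·) x y = some n) :
    ∃ c m, x = some c ∧ y = some m ∧ c + m = n := by
  cases x <;> cases y <;> simp_all [Option.map₂]

lemma alignCost_append (C : CostFun σ) (l₁ l₂ : List (Option σ × Option σ)) :
    alignCost C (l₁ ++ l₂) = Option.map₂ (· + ·) (alignCost C l₁) (alignCost C l₂) := by
  induction l₁ with
  | nil => simp [alignCost_nil, map₂_zero_left]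
  | cons p t ih => simp [alignCost_cons, ih, map₂_add_assoc]

lemma alignCost_zero (C : CostFun σ) {l : List (Option σ × Option σ)}
    (h : ∀ p ∈ l, C.C p.1 p.2 = some 0) : alignCost C l = some 0 := by
  induction l with
  | nil => rfl
  | cons p t ih =>
    rw [alignCost_cons, h p List.mem_cons_self, ih fun q hq => h q (List.mem_cons_of_mem _ hq)]
    rfl

lemma mem_ball_iff {C : CostFun σ} {k : ℕ} {L : Language σ} {w : List σ} :
    w ∈ ball C (some k) L ↔ ∃ u ∈ L, ∃ l : List (Option σ × Option σ),
      l.filterMap Prod.fst = w ∧ l.filterMap Prod.snd = u ∧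
      ∃ n, alignCost C l = some n ∧ n ≤ k := by
  constructor
  · rintro ⟨u, hu, n, hn, hnk⟩
    unfold wordComp at hn
    split at hn
    case isTrue hne =>
      obtain ⟨l, -, h1, h2, h3⟩ := Nat.sInf_mem hne
      injection hn with hn
      exact ⟨u, hu, l, h1, h2, _, h3, hn ▸ hnk⟩
    case isFalse => cases hn
  · rintro ⟨u, hu, l, h1, h2, n, h3, hnk⟩
    have key : ∃ m ∈ alignCosts C w u, m ≤ k := by
      rcases eq_or_ne l [] with rfl | hne
      · simp only [List.filterMap_nil] at h1 h2
        have h0 : n = 0 := by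
          rw [alignCost_nil] at h3; injection h3 with h3; omega
        refine ⟨0, ⟨[((none : Option σ), (none : Option σ))], by simp, by simp [← h1],
          by simp [← h2], ?_⟩, Nat.zero_le _⟩
        rw [alignCost_cons, alignCost_nil, C.refl, map₂_some_some]
      · exact ⟨n, ⟨l, hne, h1, h2, h3⟩, hnk⟩
    obtain ⟨m, hm, hmk⟩ := key
    refine ⟨u, hu, sInf (alignCosts C w u), ?_, le_trans (Nat.sInf_le hm) hmk⟩
    unfold wordComp
    rw [if_pos ⟨m, hm⟩]

lemma exists_decomp (a : σ) :
    ∀ (l : List (Option σ × Option σ)) (w : List σ), l.filterMap Prod.fst = a :: w →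
    ∃ l₀ β l₁, l = l₀ ++ (some a, β) :: l₁ ∧ (∀ p ∈ l₀, p.1 = (none : Option σ)) ∧
      l₁.filterMap Prod.fst = w := by
  intro l
  induction l with
  | nil => simp
  | cons p t ih =>
    intro w h
    obtain ⟨p1, p2⟩ := p
    cases p1 with
    | none =>
      rw [List.filterMap_cons] at h
      simp only at h
      obtain ⟨l₀, β, l₁, rfl, h0, h1⟩ := ih w h
      refine ⟨(none, p2) :: l₀, β, l₁, rfl, ?_, h1⟩
      intro q hq
      rcases List.mem_cons.1 hq with rfl | hq
      · rfl
      · exact h0 q hq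
    | some x =>
      rw [List.filterMap_cons] at h
      simp only [Option.some.injEq] at h
      obtain ⟨rfl, hw⟩ : x = a ∧ t.filterMap Prod.fst = w := by
        rw [List.cons_eq_cons] at h; exact h
      exact ⟨[], p2, t, rfl, by simp, hw⟩

lemma split_first {α : Type} (P : α → Prop) :
    ∀ l : List α, (∀ x ∈ l, P x) ∨
      ∃ m₀ q m₁, l = m₀ ++ q :: m₁ ∧ (∀ x ∈ m₀, P x) ∧ ¬ P q := by
  intro l
  induction l with
  | nil => left; simp
  | cons x t ih =>
    by_cases hx : P x
    · rcases ih with h | ⟨m₀, q, m₁, rfl, h1, h2⟩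
      · left
        intro y hy
        rcases List.mem_cons.1 hy with rfl | hy
        · exact hx
        · exact h y hy
      · right
        refine ⟨x :: m₀, q, m₁, rfl, ?_, h2⟩
        intro y hy
        rcases List.mem_cons.1 hy with rfl | hy
        · exact hx
        · exact h1 y hy
    · right; exact ⟨[], x, t, rfl, by simp, hx⟩

lemma pre_fst (w' : List σ) :
    (w'.map fun x => ((none : Option σ), (some x : Option σ))).filterMap Prod.fst = [] := by
  induction w' with
  | nil => rfl
  | cons b t ih => simp [List.filterMap_cons, ih]

lemma pre_snd (w' : List σ) :
    (w'.map fun x => ((none : Option σ), (some x : Option σ))).filterMap Prod.snd = w' := by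
  induction w' with
  | nil => rfl
  | cons b t ih => simpa [List.filterMap_cons] using ih

lemma pre_cost (C : CostFun σ) {w' : List σ} (h : ∀ b ∈ w', C.C none (some b) = some 0) :
    alignCost C (w'.map fun x => ((none : Option σ), (some x : Option σ))) = some 0 := by
  apply alignCost_zero
  intro p hp
  obtain ⟨b, hb, rfl⟩ := List.mem_map.1 hp
  exact h b hb

end QB

namespace QB

lemma mem_sup' {σ : Type} {A B : Language σ} {x : List σ} :
    x ∈ A ⊔ B ↔ x ∈ A ∨ x ∈ B := Iff.rfl

lemma ball_subO_elim {σ : Type} {C : CostFun σ} {k : ℕ} {x : Option ℕ} {L : Language σ}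
    {w : List σ} (h : w ∈ ball C (subO k x) L) :
    ∃ c, x = some c ∧ c ≤ k ∧ w ∈ ball C (some (k - c)) L := by
  cases x with
  | none =>
    exact absurd h (Set.notMem_empty w)
  | some c =>
    by_cases hc : c ≤ k
    · exact ⟨c, rfl, hc, by simpa [subO, hc] using h⟩
    · simp only [subO, Option.bind_some, if_neg hc] at h
      exact absurd h (Set.notMem_empty w)

lemma ball_subO_intro {σ : Type} {C : CostFun σ} {k c : ℕ} {x : Option ℕ} {L : Language σ}
    {w : List σ} (hx : x = some c) (hc : c ≤ k) (h : w ∈ ball C (some (k - c)) L) :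
    w ∈ ball C (subO k x) L := by
  subst hx; simpa [subO, hc] using h

end QB

/-- **Quotient formula for a general similarity operator.**  For a regular
language `L′`, a cost function `C` with associated word comparison function
`𝔽 = wordComp C`, `k ∈ ℕ` and `a ∈ Σ`:
`a⁻¹(𝔽_k(L′)) = ⋃_{L″ ∈ X(L′), b ∈ Σ} 𝔽_{k-C(a,b)}(b⁻¹(L″))
  ∪ ⋃_{L″ ∈ X(L′)} 𝔽_{k-C(a,ε)}(L″)
  ∪ a⁻¹(⋃_{L″ ∈ X(L′), b ∈ Σ, C(ε,b) ≠ 0} 𝔽_{k-C(ε,b)}(b⁻¹(L″)))`,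
where `X(L′) = {L′} ∪ {w⁻¹(L′) | w ∈ ({b | C(ε,b) = 0})*}`. -/
theorem quotient_ball {σ : Type} [Fintype σ]
    (C : CostFun σ) (L' : Language σ) (hL' : L'.IsRegular) (k : ℕ) (a : σ)
    (X : Set (Language σ))
    (hX : X = insert L' {M | ∃ w : List σ,
        (∀ b ∈ w, C.C none (some b) = some 0) ∧ M = wordQuot w L'}) :
    leftQuot a (ball C (some k) L') =
      (⨆ L'' ∈ X, ⨆ b : σ, ball C (subO k (C.C (some a) (some b))) (leftQuot b L'')) ⊔
      (⨆ L'' ∈ X, ball C (subO k (C.C (some a) none)) L'') ⊔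
      leftQuot a (⨆ L'' ∈ X, ⨆ b ∈ {b : σ | C.C none (some b) ≠ some 0},
        ball C (subO k (C.C none (some b))) (leftQuot b L'')) := by
  have hXd : ∀ L'' ∈ X, ∃ w' : List σ,
      (∀ b ∈ w', C.C none (some b) = some 0) ∧ L'' = wordQuot w' L' := by
    intro L'' h
    rw [hX, Set.mem_insert_iff] at h
    rcases h with rfl | ⟨w', hw', rfl⟩
    · exact ⟨[], by simp, rfl⟩
    · exact ⟨w', hw', rfl⟩
  have hXi : ∀ w' : List σ, (∀ b ∈ w', C.C none (some b) = some 0) →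
      wordQuot w' L' ∈ X := by
    intro w' hw'
    rw [hX]
    exact Set.mem_insert_iff.2 (Or.inr ⟨w', hw', rfl⟩)
  ext w
  rw [QB.mem_sup', QB.mem_sup']
  constructor
  · intro hw
    have hw1 : (a :: w) ∈ ball C (some k) L' := hw
    rw [QB.mem_ball_iff] at hw1
    obtain ⟨u, hu, l, hf, hs, n, hc, hnk⟩ := hw1
    obtain ⟨l₀, β, l₁, rfl, h0, h1⟩ := QB.exists_decomp a l w hf
    rcases QB.split_first (fun p => C.C none p.2 = some 0) l₀ with hall |
      ⟨m₀, q, m₁, rfl, hm₀, hq⟩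
    · -- the ε-prefix of the alignment is all zero-cost
      have hz : alignCost C l₀ = some 0 :=
        QB.alignCost_zero C (fun p hp => by rw [h0 p hp]; exact hall p hp)
      rw [QB.alignCost_append, hz, QB.map₂_zero_left, QB.alignCost_cons] at hc
      obtain ⟨c, m, hcab, hml, hcm⟩ := QB.map₂_add_eq_some hc
      have hck : c ≤ k := by omega
      have hwz : ∀ b ∈ l₀.filterMap Prod.snd, C.C none (some b) = some 0 := by
        intro b hb
        obtain ⟨p, hp, hpb⟩ := List.mem_filterMap.1 hb
        have := hall p hp
        rwa [hpb] at this
      cases β with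
      | some b =>
        refine Or.inl (Or.inl ?_)
        rw [Language.mem_iSup]
        refine ⟨wordQuot (l₀.filterMap Prod.snd) L', ?_⟩
        rw [Language.mem_iSup]
        refine ⟨hXi _ hwz, ?_⟩
        rw [Language.mem_iSup]
        refine ⟨b, QB.ball_subO_intro hcab hck ?_⟩
        rw [QB.mem_ball_iff]
        refine ⟨l₁.filterMap Prod.snd, ?_, l₁, h1, rfl, m, hml, by omega⟩
        show (l₀.filterMap Prod.snd) ++ b :: (l₁.filterMap Prod.snd) ∈ L'
        simp only [List.filterMap_append, List.filterMap_cons] at hs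
        simpa [hs] using hu
      | none =>
        refine Or.inl (Or.inr ?_)
        rw [Language.mem_iSup]
        refine ⟨wordQuot (l₀.filterMap Prod.snd) L', ?_⟩
        rw [Language.mem_iSup]
        refine ⟨hXi _ hwz, QB.ball_subO_intro hcab hck ?_⟩
        rw [QB.mem_ball_iff]
        refine ⟨l₁.filterMap Prod.snd, ?_, l₁, h1, rfl, m, hml, by omega⟩
        show (l₀.filterMap Prod.snd) ++ (l₁.filterMap Prod.snd) ∈ L'
        simp only [List.filterMap_append, List.filterMap_cons] at hs
        simpa [hs] using hu
    · -- first nonzero-cost letter in the ε-prefix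
      have hq1 : q.1 = none := h0 q (by simp)
      obtain ⟨b, hq2⟩ : ∃ b, q.2 = some b := by
        cases hq2 : q.2 with
        | none =>
          exfalso
          apply hq
          have := C.refl (none : Option σ)
          rw [hq2]
          exact this
        | some b => exact ⟨b, rfl⟩
      have hassoc : (m₀ ++ q :: m₁) ++ (some a, β) :: l₁
          = m₀ ++ q :: (m₁ ++ (some a, β) :: l₁) := by simp
      rw [hassoc] at hc hs
      have hz : alignCost C m₀ = some 0 :=
        QB.alignCost_zero C (fun p hp => by
          rw [h0 p (by simp [hp])]
          exact hm₀ p hp)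
      rw [QB.alignCost_append, hz, QB.map₂_zero_left, QB.alignCost_cons, hq1, hq2] at hc
      obtain ⟨c, m, hcb, hml, hcm⟩ := QB.map₂_add_eq_some hc
      have hck : c ≤ k := by omega
      have hwz : ∀ b' ∈ m₀.filterMap Prod.snd, C.C none (some b') = some 0 := by
        intro b' hb
        obtain ⟨p, hp, hpb⟩ := List.mem_filterMap.1 hb
        have := hm₀ p hp
        rwa [hpb] at this
      have hfr : (m₁ ++ (some a, β) :: l₁).filterMap Prod.fst = a :: w := by
        rw [List.filterMap_append]
        have : m₁.filterMap Prod.fst = [] := by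
          rw [List.filterMap_eq_nil_iff]
          intro p hp
          exact h0 p (by simp [hp])
        rw [this, List.nil_append, List.filterMap_cons]
        simpa using h1
      have hsnd : m₀.filterMap Prod.snd
          ++ b :: (m₁ ++ (some a, β) :: l₁).filterMap Prod.snd = u := by
        rw [← hs]
        simp [List.filterMap_append, List.filterMap_cons, hq2]
      refine Or.inr ?_
      show (a :: w) ∈ (⨆ L'' ∈ X, ⨆ b ∈ {b : σ | C.C none (some b) ≠ some 0},
        ball C (subO k (C.C none (some b))) (leftQuot b L''))
      rw [Language.mem_iSup]
      refine ⟨wordQuot (m₀.filterMap Prod.snd) L', ?_⟩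
      rw [Language.mem_iSup]
      refine ⟨hXi _ hwz, ?_⟩
      rw [Language.mem_iSup]
      refine ⟨b, ?_⟩
      rw [Language.mem_iSup]
      refine ⟨by rw [hq2] at hq; exact hq, QB.ball_subO_intro hcb hck ?_⟩
      rw [QB.mem_ball_iff]
      refine ⟨(m₁ ++ (some a, β) :: l₁).filterMap Prod.snd, ?_,
        m₁ ++ (some a, β) :: l₁, hfr, rfl, m, hml, by omega⟩
      show (m₀.filterMap Prod.snd)
        ++ b :: ((m₁ ++ (some a, β) :: l₁).filterMap Prod.snd) ∈ L'
      rw [hsnd]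
      exact hu
  · rintro ((hw | hw) | hw)
    · -- first union: pair (a, b)
      rw [Language.mem_iSup] at hw
      obtain ⟨L'', hw⟩ := hw
      rw [Language.mem_iSup] at hw
      obtain ⟨hL'', hw⟩ := hw
      rw [Language.mem_iSup] at hw
      obtain ⟨b, hw⟩ := hw
      obtain ⟨w', hw', rfl⟩ := hXd L'' hL''
      obtain ⟨c, hcab, hck, hw⟩ := QB.ball_subO_elim hw
      rw [QB.mem_ball_iff] at hw
      obtain ⟨u, hu, l, hf, hs, m, hml, hmk⟩ := hw
      have hu' : w' ++ b :: u ∈ L' := hu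
      show (a :: w) ∈ ball C (some k) L'
      rw [QB.mem_ball_iff]
      refine ⟨w' ++ b :: u, hu',
        (w'.map fun x => ((none : Option σ), (some x : Option σ))) ++ (some a, some b) :: l,
        ?_, ?_, c + m, ?_, by omega⟩
      · rw [List.filterMap_append, QB.pre_fst, List.nil_append, List.filterMap_cons]
        simpa using hf
      · rw [List.filterMap_append, QB.pre_snd, List.filterMap_cons, hs]
      · rw [QB.alignCost_append, QB.pre_cost C hw', QB.map₂_zero_left,
          QB.alignCost_cons, hcab, hml, QB.map₂_some_some]
    · -- second union: pair (a, ε)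
      rw [Language.mem_iSup] at hw
      obtain ⟨L'', hw⟩ := hw
      rw [Language.mem_iSup] at hw
      obtain ⟨hL'', hw⟩ := hw
      obtain ⟨w', hw', rfl⟩ := hXd L'' hL''
      obtain ⟨c, hcab, hck, hw⟩ := QB.ball_subO_elim hw
      rw [QB.mem_ball_iff] at hw
      obtain ⟨u, hu, l, hf, hs, m, hml, hmk⟩ := hw
      have hu' : w' ++ u ∈ L' := hu
      show (a :: w) ∈ ball C (some k) L'
      rw [QB.mem_ball_iff]
      refine ⟨w' ++ u,  hu',
        (w'.map fun x => ((none : Option σ), (some x : Option σ)))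
          ++ (some a, (none : Option σ)) :: l,
        ?_, ?_, c + m, ?_, by omega⟩
      · rw [List.filterMap_append, QB.pre_fst, List.nil_append, List.filterMap_cons]
        simpa using hf
      · rw [List.filterMap_append, QB.pre_snd, List.filterMap_cons, hs]
      · rw [QB.alignCost_append, QB.pre_cost C hw', QB.map₂_zero_left,
          QB.alignCost_cons, hcab, hml, QB.map₂_some_some]
    · -- third union: (ε, b) with nonzero cost
      have hw1 : (a :: w) ∈ ⨆ L'' ∈ X, ⨆ b ∈ {b : σ | C.C none (some b) ≠ some 0},
          ball C (subO k (C.C none (some b))) (leftQuot b L'') := hw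
      rw [Language.mem_iSup] at hw1
      obtain ⟨L'', hw1⟩ := hw1
      rw [Language.mem_iSup] at hw1
      obtain ⟨hL'', hw1⟩ := hw1
      rw [Language.mem_iSup] at hw1
      obtain ⟨b, hw1⟩ := hw1
      rw [Language.mem_iSup] at hw1
      obtain ⟨-, hw1⟩ := hw1
      obtain ⟨w', hw', rfl⟩ := hXd L'' hL''
      obtain ⟨c, hcb, hck, hw1⟩ := QB.ball_subO_elim hw1
      rw [QB.mem_ball_iff] at hw1
      obtain ⟨u, hu, l, hf, hs, m, hml, hmk⟩ := hw1
      have hu' : w' ++ b :: u ∈ L' := hu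
      show (a :: w) ∈ ball C (some k) L'
      rw [QB.mem_ball_iff]
      refine ⟨w' ++ b :: u, hu',
        (w'.map fun x => ((none : Option σ), (some x : Option σ)))
          ++ ((none : Option σ), (some b : Option σ)) :: l,
        ?_, ?_, c + m, ?_, by omega⟩
      · rw [List.filterMap_append, QB.pre_fst, List.nil_append, List.filterMap_cons]
        simpa using hf
      · rw [List.filterMap_append, QB.pre_snd, List.filterMap_cons, hs]
      · rw [QB.alignCost_append, QB.pre_cost C hw', QB.map₂_zero_left,
          QB.alignCost_cons, hcb, hml, QB.map₂_some_some]
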